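/- Let A be an n×n Hermitian complex matrix with spectral resolution A = λ₁P₁ + ⋯ + λ_rP_r, where λ₁,…,λ_r are distinct real numbers and P₁,…,P_r are Hermitian matrices satisfying P_iP_j = P_j if i = j, P_iP_j = 0 if i ≠ j, and P₁ + ⋯ + P_r = I, and let B be an n×n Hermitian positive semidefinite matrix. Then the following are equivalent: (a) no eigenvector of A lies in the kernel of B, i.e., for every μ ∈ ℂ and every ψ ∈ ℂⁿ with ψ ≠ 0 and Bψ = 0 one has Aψ ≠ μψ; (b) there exists θ > 0 such that Σ_{j=1}^{r} ⟨P_j x, B P_j x⟩ ≥ θ |x|² for all x ∈ ℂⁿ. -/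

import Mathlib

open Matrix Finset
open scoped ComplexOrder

/-- Auxiliary: a positive definite complex matrix admits a uniform quadratic lower bound
given by its least eigenvalue. -/
lemma aux_posdef_bound (n : ℕ) (M : Matrix (Fin n) (Fin n) ℂ) (hM : M.PosDef) :
    ∃ θ : ℝ, 0 < θ ∧ ∀ x : Fin n → ℂ,
      θ * ∑ i, Complex.normSq (x i) ≤ (star x ⬝ᵥ (M *ᵥ x)).re := by
  rcases Nat.eq_zero_or_pos n with hn | hn
  · subst hn
    exact ⟨1, one_pos, fun x => by simp [dotProduct]⟩
  · have hne : Nonempty (Fin n) := ⟨⟨0, hn⟩⟩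
    set ev := hM.1.eigenvalues with hev
    refine ⟨Finset.univ.inf' Finset.univ_nonempty ev, ?_, ?_⟩
    · exact (Finset.lt_inf'_iff _).mpr fun i _ => hM.eigenvalues_pos i
    · intro x
      set θ := Finset.univ.inf' Finset.univ_nonempty ev with hθ
      set U : Matrix (Fin n) (Fin n) ℂ := (hM.1.eigenvectorUnitary : Matrix (Fin n) (Fin n) ℂ) with hU
      have hUU : U * Uᴴ = 1 := by
        simpa [star_eq_conjTranspose] using Matrix.mem_unitaryGroup_iff.mp (hM.1.eigenvectorUnitary).2
      set y : Fin n → ℂ := star U *ᵥ x with hy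
      have h1 : star x ⬝ᵥ (M *ᵥ x)
          = star y ⬝ᵥ ((diagonal (RCLike.ofReal ∘ ev)) *ᵥ y) := by
        conv_lhs => rw [hM.1.spectral_theorem]
        simp [hy, dotProduct_mulVec, star_mulVec, vecMul_vecMul, Matrix.mul_assoc,
          star_eq_conjTranspose, conjTranspose_conjTranspose]
        rfl
      have h2 : star y ⬝ᵥ y = star x ⬝ᵥ x := by
        simp [hy, dotProduct_mulVec, star_mulVec, vecMul_vecMul, star_eq_conjTranspose,
          conjTranspose_conjTranspose, hUU]
      have h3 : ∀ z : Fin n → ℂ, (star z ⬝ᵥ z).re = ∑ i, Complex.normSq (z i) := by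
        intro z
        simp [dotProduct, Complex.re_sum, ← Complex.normSq_eq_conj_mul_self]
      have h4 : (star y ⬝ᵥ ((diagonal (RCLike.ofReal ∘ ev)) *ᵥ y)).re
          = ∑ i, ev i * Complex.normSq (y i) := by
        simp [dotProduct, mulVec_diagonal, Complex.re_sum, mul_comm, mul_left_comm,
          ← Complex.normSq_eq_conj_mul_self, Complex.normSq_apply]
      have hxy : ∑ i, Complex.normSq (x i) = ∑ i, Complex.normSq (y i) := by
        rw [← h3, ← h3, h2]
      rw [h1, h4, hxy, Finset.mul_sum]
      refine Finset.sum_le_sum fun i _ => ?_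
      exact mul_le_mul_of_nonneg_right (Finset.inf'_le _ (Finset.mem_univ i))
        (Complex.normSq_nonneg _)

/-- Let `A = ∑ λⱼ • Pⱼ` be the spectral resolution of a Hermitian complex
matrix (distinct real `λⱼ`, Hermitian idempotent mutually annihilating projections `Pⱼ`
summing to the identity), and let `B` be Hermitian positive semidefinite.  Then no
eigenvector of `A` lies in the kernel of `B` if and only if there is `θ > 0` with
`∑ⱼ ⟨Pⱼ x, B Pⱼ x⟩ ≥ θ ‖x‖²` for all `x ∈ ℂⁿ`. -/
theorem genuine_coupling_iff_uniform_projection_bound (n r : ℕ)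
    (A : Matrix (Fin n) (Fin n) ℂ) (l : Fin r → ℝ)
    (P : Fin r → Matrix (Fin n) (Fin n) ℂ)
    (hdist : Function.Injective l)
    (hPherm : ∀ j, (P j).IsHermitian)
    (hPP : ∀ i j, P i * P j = if i = j then P j else 0)
    (hsum : ∑ j, P j = 1)
    (hA : A = ∑ j, (l j : ℂ) • P j)
    (B : Matrix (Fin n) (Fin n) ℂ) (hB : B.PosSemidef) :
    (∀ (μ : ℂ) (ψ : Fin n → ℂ), ψ ≠ 0 → B *ᵥ ψ = 0 → A *ᵥ ψ ≠ μ • ψ) ↔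
    (∃ θ : ℝ, 0 < θ ∧ ∀ x : Fin n → ℂ,
      θ * ∑ i, Complex.normSq (x i) ≤
        (∑ j, star (P j *ᵥ x) ⬝ᵥ (B *ᵥ (P j *ᵥ x))).re) := by
  have sum_mulVec : ∀ (f : Fin r → Matrix (Fin n) (Fin n) ℂ) (x : Fin n → ℂ),
      (∑ j, f j) *ᵥ x = ∑ j, f j *ᵥ x := by
    intro f x; ext i
    simp only [mulVec, dotProduct, Finset.sum_apply, Matrix.sum_apply, Finset.sum_mul]
    exact Finset.sum_comm
  have dot_sum : ∀ (v : Fin n → ℂ) (f : Fin r → Fin n → ℂ),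
      v ⬝ᵥ (∑ j, f j) = ∑ j, v ⬝ᵥ f j := by
    intro v f
    simp only [dotProduct, Finset.sum_apply, Finset.mul_sum]
    exact Finset.sum_comm
  set M : Matrix (Fin n) (Fin n) ℂ := ∑ j, P j * B * P j with hM
  have hQ : ∀ x : Fin n → ℂ,
      ∑ j, star (P j *ᵥ x) ⬝ᵥ (B *ᵥ (P j *ᵥ x)) = star x ⬝ᵥ (M *ᵥ x) := by
    intro x
    rw [hM, sum_mulVec, dot_sum]
    refine Finset.sum_congr rfl fun j _ => ?_
    rw [star_mulVec, (hPherm j).eq]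
    simp only [dotProduct_mulVec, vecMul_vecMul, Matrix.mul_assoc]
  have hMherm : M.IsHermitian := by
    show Mᴴ = M
    rw [hM, conjTranspose_sum]
    refine Finset.sum_congr rfl fun j _ => ?_
    simp [conjTranspose_mul, (hPherm j).eq, hB.1.eq, Matrix.mul_assoc]
  have hMpsd : M.PosSemidef :=
    .of_dotProduct_mulVec_nonneg hMherm fun x => by rw [← hQ]; exact Finset.sum_nonneg fun j _ => hB.dotProduct_mulVec_nonneg _
  have hAP : ∀ j, A * P j = (l j : ℂ) • P j := by
    intro j
    rw [hA, Finset.sum_mul]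
    simp only [smul_mul_assoc, hPP]
    simp
  have hPA : ∀ j, P j * A = (l j : ℂ) • P j := by
    intro j
    rw [hA, Finset.mul_sum]
    simp only [mul_smul_comm, hPP]
    simp [eq_comm]
  constructor
  · intro h
    have hpd : M.PosDef := by
      refine .of_dotProduct_mulVec_pos hMherm fun ⦃x⦄ hx => ?_
      refine lt_of_le_of_ne (hMpsd.dotProduct_mulVec_nonneg x) fun hc => ?_
      have hterm : ∀ j ∈ Finset.univ, star (P j *ᵥ x) ⬝ᵥ (B *ᵥ (P j *ᵥ x)) = 0 := by
        apply (Finset.sum_eq_zero_iff_of_nonneg (fun j _ => hB.dotProduct_mulVec_nonneg _)).mp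
        rw [hQ x, ← hc]
      have hBz : ∀ j, B *ᵥ (P j *ᵥ x) = 0 := fun j =>
        (hB.dotProduct_mulVec_zero_iff _).mp (hterm j (Finset.mem_univ j))
      obtain ⟨j, hj⟩ : ∃ j, P j *ᵥ x ≠ 0 := by
        by_contra hall
        push_neg at hall
        apply hx
        have hx1 : x = (∑ j, P j) *ᵥ x := by rw [hsum, one_mulVec]
        rw [hx1, sum_mulVec]
        exact Finset.sum_eq_zero fun j _ => hall j
      exact h (l j) (P j *ᵥ x) hj (hBz j) (by
        rw [mulVec_mulVec, hAP j, smul_mulVec])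
    obtain ⟨θ, hθ, hbd⟩ := aux_posdef_bound n M hpd
    exact ⟨θ, hθ, fun x => by rw [hQ x]; exact hbd x⟩
  · rintro ⟨θ, hθ, hbd⟩ μ ψ hψ hBψ hAψ
    have hsub : ∀ j, ((l j : ℂ) - μ) • (P j *ᵥ ψ) = 0 := by
      intro j
      have h0 : P j *ᵥ (A *ᵥ ψ) = P j *ᵥ (μ • ψ) := by rw [hAψ]
      rw [mulVec_mulVec, hPA j, smul_mulVec, mulVec_smul] at h0
      rw [sub_smul, h0, sub_self]
    have hcase : ∀ j, B *ᵥ (P j *ᵥ ψ) = 0 ∨ P j *ᵥ ψ = 0 := by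
      intro j
      rcases smul_eq_zero.mp (hsub j) with hc | hc
      · left
        have hμ : μ = (l j : ℂ) := by
          have := sub_eq_zero.mp hc; exact this.symm
        have hψj : ψ = P j *ᵥ ψ := by
          conv_lhs => rw [show ψ = (∑ k, P k) *ᵥ ψ by rw [hsum, one_mulVec], sum_mulVec]
          refine Finset.sum_eq_single j (fun k _ hk => ?_)
            (fun hmem => absurd (Finset.mem_univ j) hmem)
          rcases smul_eq_zero.mp (hsub k) with hck | hck
          · exfalso
            apply hk
            apply hdist
            have : (l k : ℂ) = (l j : ℂ) := by
              rw [sub_eq_zero] at hck; rw [hck, hμ]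
            exact_mod_cast this
          · exact hck
        rw [← hψj]; exact hBψ
      · right; exact hc
    have hzero : ∑ j, star (P j *ᵥ ψ) ⬝ᵥ (B *ᵥ (P j *ᵥ ψ)) = 0 :=
      Finset.sum_eq_zero fun j _ => by
        rcases hcase j with hc | hc
        · rw [hc, dotProduct_zero]
        · rw [hc]; simp
    have hle := hbd ψ
    rw [hzero] at hle
    simp only [Complex.zero_re] at hle
    have hpos : 0 < ∑ i, Complex.normSq (ψ i) := by
      obtain ⟨i, hi⟩ := Function.ne_iff.mp hψ
      exact Finset.sum_pos' (fun i _ => Complex.normSq_nonneg _)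
        ⟨i, Finset.mem_univ i, Complex.normSq_pos.mpr hi⟩
    nlinarith
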